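/- Let E be a group and N a normal subgroup of E with N contained in both the center Z(E) and the derived subgroup [E,E] of E. If the quotient group E/N is finitely generated, then E is finitely generated. -/

import Mathlib

open Pointwise
open scoped commutatorElement


/-- Every stem extension of a finitely generated group is
finitely generated: if `N` is a normal subgroup of `E` contained in both the
center `Z(E)` and the derived subgroup `[E,E]`, and `E ⧸ N` is finitely
generated, then `E` is finitely generated. -/
theorem stem_extension_fg
    {E : Type*} [Group E] (N : Subgroup E) [N.Normal]
    (hN : N ≤ Subgroup.center E ⊓ commutator E)
    (hQ : Group.FG (E ⧸ N)) :
    Group.FG E := by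
  obtain ⟨S, hS, hSfin⟩ := Group.fg_iff.mp hQ
  set T : Set E := Quotient.out '' S with hT
  have hTfin : T.Finite := hSfin.image _
  set H : Subgroup E := Subgroup.closure T with hH
  have hmap : Subgroup.map (QuotientGroup.mk' N) H = ⊤ := by
    rw [hH, MonoidHom.map_closure]
    have : (QuotientGroup.mk' N) '' T = S := by
      rw [hT, Set.image_image]
      simp only [QuotientGroup.mk'_apply, Quotient.out_eq, Set.image_id']
    rw [this, hS]
  have hsup : H ⊔ N = ⊤ := by
    have := congrArg (Subgroup.comap (QuotientGroup.mk' N)) hmap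
    rwa [Subgroup.comap_map_eq, QuotientGroup.ker_mk', Subgroup.comap_top] at this
  have hcomm : commutator E ≤ H := by
    rw [commutator_def, Subgroup.commutator_le]
    intro g₁ _ g₂ _
    have hg₁ : g₁ ∈ (H : Set E) * (N : Set E) := by
      rw [← Subgroup.mul_normal, hsup]; trivial
    have hg₂ : g₂ ∈ (H : Set E) * (N : Set E) := by
      rw [← Subgroup.mul_normal, hsup]; trivial
    obtain ⟨h₁, hh₁, n₁, hn₁, rfl⟩ := hg₁
    obtain ⟨h₂, hh₂, n₂, hn₂, rfl⟩ := hg₂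
    have c1 : ∀ x, n₁ * x = x * n₁ := fun x =>
      (Subgroup.mem_center_iff.mp ((hN hn₁).1) x).symm
    have c2 : ∀ x, n₂ * x = x * n₂ := fun x =>
      (Subgroup.mem_center_iff.mp ((hN hn₂).1) x).symm
    have e1 : ⁅h₁ * n₁, h₂ * n₂⁆ = ⁅h₁, h₂ * n₂⁆ := by
      rw [commutatorElement_def, commutatorElement_def, mul_inv_rev]
      calc h₁ * n₁ * (h₂ * n₂) * (n₁⁻¹ * h₁⁻¹) * (h₂ * n₂)⁻¹
          = h₁ * (n₁ * (h₂ * n₂) * n₁⁻¹) * h₁⁻¹ * (h₂ * n₂)⁻¹ := by group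
        _ = h₁ * (h₂ * n₂) * h₁⁻¹ * (h₂ * n₂)⁻¹ := by
            rw [c1 (h₂ * n₂), mul_inv_cancel_right]
    have e2 : ⁅h₁, h₂ * n₂⁆ = ⁅h₁, h₂⁆ := by
      rw [commutatorElement_def, commutatorElement_def, mul_inv_rev]
      calc h₁ * (h₂ * n₂) * h₁⁻¹ * (n₂⁻¹ * h₂⁻¹)
          = h₁ * h₂ * (n₂ * h₁⁻¹ * n₂⁻¹) * h₂⁻¹ := by group
        _ = h₁ * h₂ * h₁⁻¹ * h₂⁻¹ := by rw [c2 h₁⁻¹, mul_inv_cancel_right]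
    rw [e1, e2]
    rw [commutatorElement_def]
    exact mul_mem (mul_mem (mul_mem hh₁ hh₂) (inv_mem hh₁)) (inv_mem hh₂)
  have hNH : N ≤ H := le_trans (le_trans hN inf_le_right) hcomm
  have hHtop : H = ⊤ := by
    rw [← hsup, sup_eq_left.mpr hNH]
  exact Group.fg_iff.mpr ⟨T, hHtop ▸ rfl, hTfin⟩
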